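/- Let X₁ take values −1, 0, 1 each with probability 1/3, Sₙ the sum of n i.i.d. copies, N ≥ 2, X₀ uniform on {0,…,N−1} independent of the walk, and Rₙ = (X₀ + Sₙ) mod N. Then there exists a constant c₇ > 0 (independent of N) such that P(⋃_{n=1}^N {Rₙ = n mod N}) ≥ c₇. -/

import Mathlib

open MeasureTheory ProbabilityTheory Finset ENNReal


open scoped Classical in
theorem key_det (N : ℕ) (hN : 2 ≤ N) (x : ℕ → ℤ)
    (hx : ∀ j < N, x j = -1 ∨ x j = 0 ∨ x j = 1)
    (hK : N + 1 ≤ 2 * #{j ∈ range N | x j ≠ 1}) :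
    N - 1 ≤ 4 * #((range N).filter (fun a : ℕ => ∃ n, 1 ≤ n ∧ n ≤ N ∧
        ((a : ℤ) + ∑ j ∈ range n, x j) % (N : ℤ) = (n : ℤ) % (N : ℤ))) := by
  have hNpos : (0:ℤ) < (N:ℤ) := by exact_mod_cast (by omega : 0 < N)
  set W : ℕ → ℤ := fun n => (∑ j ∈ range n, x j) - n with hWdef
  have hstep : ∀ k, W (k+1) = W k + (x k - 1) := by
    intro k; simp only [hWdef, sum_range_succ]; push_cast; ring
  have hxle : ∀ j < N, x j ≤ 1 ∧ -1 ≤ x j := by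
    intro j hj; rcases hx j hj with h|h|h <;> simp [h]
  have hmono : ∀ m n, m ≤ n → n ≤ N → W n ≤ W m := by
    intro m n hmn hnN
    induction n, hmn using Nat.le_induction with
    | base => exact le_refl _
    | succ n hmn ih =>
      have h1 := ih (by omega)
      have h2 := (hxle n (by omega)).1
      rw [hstep n]; linarith
  have hW0 : W 0 = 0 := by simp [hWdef]
  have hub : ∀ n, n ≤ N → W n ≤ 0 := by
    intro n hn; have := hmono 0 n (Nat.zero_le _) hn; rw [hW0] at this; exact this
  have hlb : ∀ n, n ≤ N → -(2*(N:ℤ)) ≤ W n := by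
    intro n hn
    have h1 : -(n:ℤ) ≤ ∑ j ∈ range n, x j := by
      have : ∑ j ∈ range n, (-1 : ℤ) ≤ ∑ j ∈ range n, x j := by
        apply Finset.sum_le_sum; intro j hj
        exact (hxle j (lt_of_lt_of_le (mem_range.mp hj) hn)).2
      simpa using this
    have hn' : (n:ℤ) ≤ N := by exact_mod_cast hn
    simp only [hWdef]; linarith
  set V : Finset ℤ := (Icc 1 N).image W with hVdef
  have hdec : ∀ a b : ℕ, a < b → b < N → x b ≠ 1 → W (b+1) < W (a+1) := by
    intro a b hlt hbN hxb
    have h1 : W (b+1) = W b + (x b - 1) := hstep b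
    have h2 : x b ≤ 0 := by rcases hx b hbN with h|h|h <;> omega
    have h3 : W b ≤ W (a+1) := hmono (a+1) b (by omega) (by omega)
    linarith
  have hKV : #{j ∈ range N | x j ≠ 1} ≤ #V := by
    apply Finset.card_le_card_of_injOn (fun j => W (j+1))
    · intro j hj
      have hjN : j < N := mem_range.mp (mem_filter.mp hj).1
      exact mem_image_of_mem W (by rw [mem_Icc]; omega)
    · intro a ha b hb hab
      simp only [coe_filter, Set.mem_setOf_eq, mem_range] at ha hb
      rcases lt_trichotomy a b with h|h|h
      · exact absurd hab (ne_of_gt (hdec a b h hb.1 hb.2))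
      · exact h
      · exact absurd hab (ne_of_lt (hdec b a h ha.1 ha.2))
  set A : Finset ℕ := (range N).filter (fun a : ℕ => ∃ n, 1 ≤ n ∧ n ≤ N ∧
      ((a : ℤ) + ∑ j ∈ range n, x j) % (N : ℤ) = (n : ℤ) % (N : ℤ)) with hAdef
  set V' : Finset ℤ := V.erase (-(2*(N:ℤ))) with hV'def
  set g : ℤ → ℕ := fun v => ((-v) % (N:ℤ)).toNat with hgdef
  have hgval : ∀ v : ℤ, ((g v : ℤ)) = (-v) % (N:ℤ) :=
    fun v => Int.toNat_of_nonneg (Int.emod_nonneg _ (ne_of_gt hNpos))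
  have hVmem : ∀ v ∈ V', (-(2*(N:ℤ)) < v ∧ v ≤ 0) ∧ ∃ n, 1 ≤ n ∧ n ≤ N ∧ W n = v := by
    intro v hv
    rcases mem_erase.mp hv with ⟨hvne, hvV⟩
    rcases mem_image.mp hvV with ⟨n, hn, hWn⟩
    rw [mem_Icc] at hn
    refine ⟨⟨?_, ?_⟩, n, hn.1, hn.2, hWn⟩
    · rcases lt_or_eq_of_le (hlb n hn.2) with h|h
      · rw [hWn] at h; exact h
      · exact absurd (h.trans hWn) (fun hh => hvne hh.symm)
    · rw [← hWn]; exact hub n hn.2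
  have hmaps : ∀ v ∈ V', g v ∈ A := by
    intro v hv
    obtain ⟨⟨hvlb, hvub⟩, n, hn1, hnN, hWn⟩ := hVmem v hv
    have hgN : g v < N := by
      have h1 : (-v) % (N:ℤ) < N := Int.emod_lt_of_pos _ hNpos
      have := hgval v
      omega
    rw [hAdef, mem_filter]
    refine ⟨mem_range.mpr hgN, n, hn1, hnN, ?_⟩
    have hsum : ∑ j ∈ range n, x j = v + n := by
      have : W n = (∑ j ∈ range n, x j) - n := rfl
      omega
    rw [hsum, hgval v]
    calc ((-v) % (N:ℤ) + (v + n)) % N = ((-v) + (v + n)) % N := by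
          rw [Int.add_emod, Int.emod_emod_of_dvd _ dvd_rfl, ← Int.add_emod]
      _ = (n:ℤ) % N := by ring_nf
  have hfib : ∀ b ∈ A, #{v ∈ V' | g v = b} ≤ 2 := by
    intro b hb
    have hbN : b < N := mem_range.mp (mem_filter.mp hb).1
    have hsub : {v ∈ V' | g v = b} ⊆ ({-(b:ℤ), -(b:ℤ) - N} : Finset ℤ) := by
      intro v hv
      rcases mem_filter.mp hv with ⟨hvV', hgvb⟩
      obtain ⟨⟨hvlb, hvub⟩, _⟩ := hVmem v hvV'
      have hbv : (b:ℤ) = (-v) % (N:ℤ) := by rw [← hgvb]; exact hgval v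
      have hdm : (N:ℤ) * ((-v) / N) + (-v) % N = -v := Int.mul_ediv_add_emod _ _
      set q : ℤ := (-v) / (N:ℤ) with hqdef
      have hq0 : 0 ≤ q := Int.ediv_nonneg (by linarith) (le_of_lt hNpos)
      have hbpos : (0:ℤ) ≤ b := by exact_mod_cast Nat.zero_le b
      have hbltN : (b:ℤ) < N := by exact_mod_cast hbN
      have hq2 : q < 2 := by nlinarith
      have hq01 : q = 0 ∨ q = 1 := by omega
      simp only [mem_insert, mem_singleton]
      rcases hq01 with h|h <;> [left; right] <;> rw [h] at hdm <;> omega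
    calc #{v ∈ V' | g v = b} ≤ #({-(b:ℤ), -(b:ℤ) - N} : Finset ℤ) := card_le_card hsub
      _ ≤ 2 := (Finset.card_insert_le _ _).trans (by simp)
  have hV'A : #V' ≤ 2 * #A := card_le_mul_card_image_of_maps_to hmaps 2 hfib
  have hVV' : #V ≤ #V' + 1 := by
    have hsub : V ⊆ insert (-(2*(N:ℤ))) V' := by
      intro v hv
      by_cases h : v = -(2*(N:ℤ))
      · simp [h]
      · exact mem_insert_of_mem (mem_erase.mpr ⟨h, hv⟩)
    calc #V ≤ #(insert (-(2*(N:ℤ))) V') := card_le_card hsub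
      _ ≤ #V' + 1 := Finset.card_insert_le _ _
  omega


theorem lazy_walk_catch_prob_lower_bound {Ω : Type*} [MeasurableSpace Ω] (μ : Measure Ω)
    [IsProbabilityMeasure μ] (X : ℕ → Ω → ℤ) (hX : ∀ i, Measurable (X i))
    (hindep : iIndepFun X μ)
    (hident : ∀ i, IdentDistrib (X i) (X 0) μ μ)
    (hm1 : μ {ω | X 0 ω = -1} = 1 / 3)
    (h0 : μ {ω | X 0 ω = 0} = 1 / 3)
    (h1 : μ {ω | X 0 ω = 1} = 1 / 3) :
    ∃ c₇ : ℝ≥0∞, 0 < c₇ ∧ ∀ N : ℕ, ∀ hN : 2 ≤ N,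
      c₇ ≤ ((PMF.uniformOfFinset (Finset.range N)
            (Finset.nonempty_range_iff.mpr (by omega))).toMeasure.prod μ)
        {z : ℕ × Ω | ∃ n, 1 ≤ n ∧ n ≤ N ∧
          ((z.1 : ℤ) + ∑ j ∈ Finset.range n, X j z.2) % (N : ℤ) = (n : ℤ) % (N : ℤ)} := by
  classical
  refine ⟨(24:ℝ≥0∞)⁻¹, ENNReal.inv_pos.mpr (by norm_num), ?_⟩
  intro N hN
  have hNne : (N:ℝ≥0∞) ≠ 0 := by
    simp only [ne_eq, Nat.cast_eq_zero]; omega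
  have hNtop : (N:ℝ≥0∞) ≠ ⊤ := ENNReal.natCast_ne_top N
  have hne : (Finset.range N).Nonempty := Finset.nonempty_range_iff.mpr (by omega)
  set m : Measure ℕ := (PMF.uniformOfFinset (Finset.range N) hne).toMeasure with hmdef
  set E : Set (ℕ × Ω) := {z : ℕ × Ω | ∃ n, 1 ≤ n ∧ n ≤ N ∧
      ((z.1 : ℤ) + ∑ j ∈ Finset.range n, X j z.2) % (N : ℤ) = (n : ℤ) % (N : ℤ)} with hEdef
  set Ea : ℕ → Set Ω := fun a => {ω | ∃ n, 1 ≤ n ∧ n ≤ N ∧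
      ((a : ℤ) + ∑ j ∈ Finset.range n, X j ω) % (N : ℤ) = (n : ℤ) % (N : ℤ)} with hEadef
  have hSmeas : ∀ n : ℕ, Measurable (fun ω => ∑ j ∈ range n, X j ω) :=
    fun n => Finset.measurable_sum _ fun j _ => hX j
  have hEaMeas : ∀ a, MeasurableSet (Ea a) := by
    intro a
    have heq : Ea a = ⋃ n ∈ Set.Icc 1 N,
        {ω | ((a:ℤ) + ∑ j ∈ range n, X j ω) % (N:ℤ) = (n:ℤ) % (N:ℤ)} := by
      ext ω
      simp only [hEadef, Set.mem_setOf_eq, Set.mem_iUnion, Set.mem_Icc, exists_prop]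
      exact ⟨fun ⟨n,h1',h2,h3⟩ => ⟨n,⟨h1',h2⟩,h3⟩, fun ⟨n,⟨h1',h2⟩,h3⟩ => ⟨n,h1',h2,h3⟩⟩
    rw [heq]
    exact MeasurableSet.biUnion (Set.to_countable _) (fun n _ =>
      ((measurable_of_countable (fun z : ℤ => z % (N:ℤ))).comp
        (measurable_const.add (hSmeas n))) (measurableSet_singleton _))
  have hEMeas : MeasurableSet E := by
    have heq : E = ⋃ n ∈ Set.Icc 1 N,
        {z : ℕ × Ω | ((z.1:ℤ) + ∑ j ∈ range n, X j z.2) % (N:ℤ) = (n:ℤ) % (N:ℤ)} := by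
      ext z
      simp only [hEdef, Set.mem_setOf_eq, Set.mem_iUnion, Set.mem_Icc, exists_prop]
      exact ⟨fun ⟨n,h1',h2,h3⟩ => ⟨n,⟨h1',h2⟩,h3⟩, fun ⟨n,⟨h1',h2⟩,h3⟩ => ⟨n,h1',h2,h3⟩⟩
    rw [heq]
    refine MeasurableSet.biUnion (Set.to_countable _) (fun n _ => ?_)
    exact ((measurable_of_countable (fun z : ℤ => z % (N:ℤ))).comp
      (((measurable_of_countable (fun k : ℕ => (k:ℤ))).comp measurable_fst).add
        ((hSmeas n).comp measurable_snd))) (measurableSet_singleton _)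
  -- the counting function
  set F : Ω → ℝ≥0∞ := fun ω => ∑ a ∈ range N,
      (Ea a).indicator (fun _ => (1:ℝ≥0∞)) ω with hFdef
  have hFmeas : Measurable F :=
    Finset.measurable_sum _ (fun a _ => measurable_const.indicator (hEaMeas a))
  have hFcard : ∀ ω, F ω = (#((range N).filter (fun a : ℕ => ω ∈ Ea a)) : ℝ≥0∞) := by
    intro ω
    simp only [hFdef, Set.indicator_apply]
    exact Finset.sum_boole _ _
  have hm_in : ∀ a ∈ range N, m {a} = ((N:ℕ) : ℝ≥0∞)⁻¹ := by
    intro a ha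
    rw [hmdef, PMF.toMeasure_apply_singleton _ _ (measurableSet_singleton a),
      PMF.uniformOfFinset_apply_of_mem hne ha, card_range]
  have hm_out : ∀ a ∉ range N, m {a} = 0 := by
    intro a ha
    rw [hmdef, PMF.toMeasure_apply_singleton _ _ (measurableSet_singleton a),
      PMF.uniformOfFinset_apply_of_notMem hne ha]
  have hsum_eq : ∑ a ∈ range N, μ (Ea a) = ∫⁻ ω, F ω ∂μ := by
    rw [hFdef, lintegral_finset_sum _ (fun a _ => measurable_const.indicator (hEaMeas a))]
    exact Finset.sum_congr rfl fun a _ => by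
      rw [lintegral_indicator_const (hEaMeas a), one_mul]
  have hνE : (m.prod μ) E = (∫⁻ ω, F ω ∂μ) * (N:ℝ≥0∞)⁻¹ := by
    rw [Measure.prod_apply hEMeas]
    have hsec : ∀ a : ℕ, (Prod.mk a ⁻¹' E) = Ea a := fun a => rfl
    calc ∫⁻ a, μ (Prod.mk a ⁻¹' E) ∂m = ∑' a, μ (Prod.mk a ⁻¹' E) * m {a} :=
          lintegral_countable' _
      _ = ∑ a ∈ range N, μ (Ea a) * (N:ℝ≥0∞)⁻¹ := by
          rw [tsum_eq_sum (s := range N) (fun a ha => by rw [hm_out a ha, mul_zero])]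
          refine Finset.sum_congr rfl fun a ha => ?_
          rw [hsec, hm_in a ha]
      _ = (∑ a ∈ range N, μ (Ea a)) * (N:ℝ≥0∞)⁻¹ := by rw [Finset.sum_mul]
      _ = (∫⁻ ω, F ω ∂μ) * (N:ℝ≥0∞)⁻¹ := by rw [hsum_eq]
  -- the ones-counting function
  set f1 : Ω → ℝ≥0∞ := fun ω => ∑ j ∈ range N,
      ({ω' | X j ω' = 1}).indicator (fun _ => (1:ℝ≥0∞)) ω with hf1def
  have hXjSetMeas : ∀ (j : ℕ) (c : ℤ), MeasurableSet {ω | X j ω = c} :=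
    fun j c => hX j (measurableSet_singleton c)
  have hf1meas : Measurable f1 :=
    Finset.measurable_sum _ (fun j _ => measurable_const.indicator (hXjSetMeas j 1))
  have hf1card : ∀ ω, f1 ω = (#((range N).filter (fun j : ℕ => X j ω = 1)) : ℝ≥0∞) := by
    intro ω
    simp only [hf1def, Set.indicator_apply, Set.mem_setOf_eq]
    exact Finset.sum_boole _ _
  have hXj1 : ∀ j, μ {ω | X j ω = 1} = 1/3 :=
    fun j => ((hident j).measure_mem_eq (measurableSet_singleton (1:ℤ))).trans h1
  have hf1int : ∫⁻ ω, f1 ω ∂μ = (N:ℝ≥0∞) * (1/3) := by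
    rw [hf1def, lintegral_finset_sum _ (fun j _ => measurable_const.indicator (hXjSetMeas j 1))]
    have : ∀ j ∈ range N, ∫⁻ ω, ({ω' | X j ω' = 1}).indicator (fun _ => (1:ℝ≥0∞)) ω ∂μ
        = 1/3 := fun j _ => by
      rw [lintegral_indicator_const (hXjSetMeas j 1), one_mul, hXj1 j]
    rw [Finset.sum_congr rfl this, Finset.sum_const, card_range, nsmul_eq_mul]
  -- Markov's inequality
  have h2fmeas : Measurable fun ω => 2 * f1 ω := hf1meas.const_mul 2
  have hmark : μ {ω | (N:ℝ≥0∞) ≤ 2 * f1 ω} ≤ 2 * 3⁻¹ := by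
    have h := meas_ge_le_lintegral_div (μ := μ) h2fmeas.aemeasurable
      (ε := (N:ℝ≥0∞)) hNne hNtop
    have hint : ∫⁻ ω, 2 * f1 ω ∂μ = (N:ℝ≥0∞) * (2 * 3⁻¹) := by
      rw [lintegral_const_mul 2 hf1meas, hf1int, one_div]; ring
    rw [hint] at h
    rwa [mul_comm ((N:ℝ≥0∞)) _, mul_div_assoc, ENNReal.div_self hNne hNtop, mul_one] at h
  set Bset : Set Ω := {ω | (N:ℝ≥0∞) ≤ 2 * f1 ω}ᶜ with hBdef
  have hBcMeas : MeasurableSet {ω | (N:ℝ≥0∞) ≤ 2 * f1 ω} :=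
    measurableSet_le measurable_const h2fmeas
  have hBMeas : MeasurableSet Bset := hBcMeas.compl
  have h3inv : (3:ℝ≥0∞) * 3⁻¹ = 1 := ENNReal.mul_inv_cancel (by norm_num) (by norm_num)
  have hBge : 3⁻¹ ≤ μ Bset := by
    rw [hBdef, prob_compl_eq_one_sub hBcMeas]
    have h13 : (1:ℝ≥0∞) - 2 * 3⁻¹ = 3⁻¹ := by
      have he : (1:ℝ≥0∞) = 3⁻¹ + 2 * 3⁻¹ := by rw [← h3inv]; ring
      rw [he, ENNReal.add_sub_cancel_right (ENNReal.mul_ne_top (by norm_num) (ENNReal.inv_ne_top.mpr (by norm_num)))]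
    rw [← h13]
    exact tsub_le_tsub_left hmark 1
  -- the good-values set
  set G : Set Ω := {ω | ∀ j < N, X j ω = -1 ∨ X j ω = 0 ∨ X j ω = 1} with hGdef
  have hGMeas : MeasurableSet G := by
    have heq : G = ⋂ j ∈ Set.Iio N,
        ({ω | X j ω = -1} ∪ ({ω | X j ω = 0} ∪ {ω | X j ω = 1})) := by
      ext ω
      simp only [hGdef, Set.mem_setOf_eq, Set.mem_iInter, Set.mem_Iio, Set.mem_union]
    rw [heq]
    exact MeasurableSet.biInter (Set.to_countable _) fun j _ =>
      ((hXjSetMeas j (-1)).union ((hXjSetMeas j 0).union (hXjSetMeas j 1)))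
  have hXjval : ∀ (j : ℕ) (c : ℤ), μ {ω | X 0 ω = c} = 1/3 → μ {ω | X j ω = c} = 1/3 :=
    fun j c hc => ((hident j).measure_mem_eq (measurableSet_singleton c)).trans hc
  have hGfull : μ Gᶜ = 0 := by
    have hsub : Gᶜ ⊆ ⋃ j ∈ Set.Iio N, {ω | ¬ (X j ω = -1 ∨ X j ω = 0 ∨ X j ω = 1)} := by
      intro ω hω
      simp only [hGdef, Set.mem_compl_iff, Set.mem_setOf_eq, not_forall] at hω
      obtain ⟨j, hj, hval⟩ := hω
      exact Set.mem_biUnion hj hval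
    refine measure_mono_null hsub (measure_biUnion_null_iff (Set.to_countable _) |>.mpr ?_)
    intro j _
    have hT : μ ({ω | X j ω = -1} ∪ ({ω | X j ω = 0} ∪ {ω | X j ω = 1})) = 1 := by
      have hd1 : Disjoint {ω | X j ω = (-1:ℤ)} ({ω | X j ω = 0} ∪ {ω | X j ω = 1}) := by
        rw [Set.disjoint_left]
        rintro ω h1' (h2 | h2) <;> simp only [Set.mem_setOf_eq] at h1' h2 <;> omega
      have hd2 : Disjoint {ω | X j ω = (0:ℤ)} {ω | X j ω = 1} := by
        rw [Set.disjoint_left]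
        rintro ω h1' h2 <;> simp only [Set.mem_setOf_eq] at h1' h2; omega
      rw [measure_union hd1 ((hXjSetMeas j 0).union (hXjSetMeas j 1)),
        measure_union hd2 (hXjSetMeas j 1), hXjval j _ hm1, hXjval j _ h0, hXjval j _ h1]
      rw [one_div, ← h3inv]; ring
    have heqT : {ω | ¬ (X j ω = -1 ∨ X j ω = 0 ∨ X j ω = 1)} =
        ({ω | X j ω = -1} ∪ ({ω | X j ω = 0} ∪ {ω | X j ω = 1}))ᶜ := by
      ext ω; simp [Set.mem_union]
    rw [heqT, prob_compl_eq_one_sub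
      ((hXjSetMeas j (-1)).union ((hXjSetMeas j 0).union (hXjSetMeas j 1))), hT, tsub_self]
  have hGBMeas : MeasurableSet (G ∩ Bset) := hGMeas.inter hBMeas
  have hGB : 3⁻¹ ≤ μ (G ∩ Bset) := by
    have hsub : Bset ⊆ (G ∩ Bset) ∪ Gᶜ := by
      intro ω hω
      by_cases hg : ω ∈ G
      · exact Or.inl ⟨hg, hω⟩
      · exact Or.inr hg
    calc (3:ℝ≥0∞)⁻¹ ≤ μ Bset := hBge
      _ ≤ μ ((G ∩ Bset) ∪ Gᶜ) := measure_mono hsub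
      _ ≤ μ (G ∩ Bset) + μ Gᶜ := measure_union_le _ _
      _ = μ (G ∩ Bset) := by rw [hGfull, add_zero]
  -- pointwise application of the deterministic lemma
  have hpoint : ∀ ω, (G ∩ Bset).indicator (fun _ => ((N-1:ℕ):ℝ≥0∞)) ω ≤ 4 * F ω := by
    intro ω
    by_cases hω : ω ∈ G ∩ Bset
    · rw [Set.indicator_of_mem hω]
      obtain ⟨hg, hb⟩ := hω
      have hcnt' : ¬ ((N:ℝ≥0∞) ≤ 2 * f1 ω) := hb
      rw [hf1card ω] at hcnt'
      have hcast : (2:ℝ≥0∞) * (#((range N).filter (fun j : ℕ => X j ω = 1)) : ℝ≥0∞)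
          = ((2 * #((range N).filter (fun j : ℕ => X j ω = 1)) : ℕ) : ℝ≥0∞) := by
        push_cast; ring
      rw [hcast] at hcnt'
      have hcnt : ¬ (N ≤ 2 * #((range N).filter (fun j : ℕ => X j ω = 1))) := by
        exact_mod_cast hcnt'
      have hfilt := Finset.card_filter_add_card_filter_not
        (s := range N) (p := fun j => X j ω = 1)
      rw [card_range] at hfilt
      have hK : N + 1 ≤ 2 * #((range N).filter (fun j : ℕ => ¬ (X j ω = 1))) := by omega
      have hdet := key_det N hN (fun j => X j ω) hg hK
      rw [hFcard ω]
      have hfeq : ((range N).filter (fun a : ℕ => ω ∈ Ea a)) =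
          ((range N).filter (fun a : ℕ => ∃ n, 1 ≤ n ∧ n ≤ N ∧
            ((a : ℤ) + ∑ j ∈ range n, X j ω) % (N : ℤ) = (n : ℤ) % (N : ℤ))) := by
        apply Finset.filter_congr
        intro a _
        exact Iff.rfl
      rw [hfeq]
      have : ((N-1:ℕ):ℝ≥0∞) ≤ ((4 * #((range N).filter (fun a : ℕ => ∃ n, 1 ≤ n ∧ n ≤ N ∧
          ((a : ℤ) + ∑ j ∈ range n, X j ω) % (N : ℤ) = (n : ℤ) % (N : ℤ))) : ℕ) : ℝ≥0∞) := by
        exact_mod_cast hdet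
      calc ((N-1:ℕ):ℝ≥0∞) ≤ _ := this
        _ = 4 * (#((range N).filter (fun a : ℕ => ∃ n, 1 ≤ n ∧ n ≤ N ∧
            ((a : ℤ) + ∑ j ∈ range n, X j ω) % (N : ℤ) = (n : ℤ) % (N : ℤ))) : ℝ≥0∞) := by
          push_cast; ring
    · rw [Set.indicator_of_notMem hω]
      exact zero_le
  have hIbound : ((N-1:ℕ):ℝ≥0∞) * μ (G ∩ Bset) ≤ 4 * ∫⁻ ω, F ω ∂μ := by
    rw [← lintegral_indicator_const hGBMeas, ← lintegral_const_mul 4 hFmeas]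
    exact lintegral_mono hpoint
  have hIge : ((N-1:ℕ):ℝ≥0∞) * 3⁻¹ ≤ 4 * ∫⁻ ω, F ω ∂μ :=
    le_trans (mul_le_mul_right hGB _) hIbound
  have h4 : (4:ℝ≥0∞)⁻¹ * (((N-1:ℕ):ℝ≥0∞) * 3⁻¹) ≤ ∫⁻ ω, F ω ∂μ := by
    have h := mul_le_mul_right hIge (4:ℝ≥0∞)⁻¹
    rwa [show (4:ℝ≥0∞)⁻¹ * (4 * ∫⁻ ω, F ω ∂μ) = ∫⁻ ω, F ω ∂μ from by
      rw [← mul_assoc, ENNReal.inv_mul_cancel (by norm_num) (by norm_num), one_mul]] at h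
  -- final arithmetic
  have h12Nne : (12 * (N:ℝ≥0∞)) ≠ 0 := mul_ne_zero (by norm_num) hNne
  have h12Ntop : (12 * (N:ℝ≥0∞)) ≠ ⊤ := ENNReal.mul_ne_top (by norm_num) hNtop
  have hkey : (24:ℝ≥0∞)⁻¹ * (12 * (N:ℝ≥0∞)) ≤ ((N-1:ℕ):ℝ≥0∞) := by
    have hnat : 12 * N ≤ 24 * (N-1) := by omega
    calc (24:ℝ≥0∞)⁻¹ * (12 * (N:ℝ≥0∞)) = 24⁻¹ * ((12 * N : ℕ) : ℝ≥0∞) := by push_cast; ring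
      _ ≤ 24⁻¹ * ((24 * (N-1) : ℕ) : ℝ≥0∞) := mul_le_mul_right (by exact_mod_cast hnat) _
      _ = 24⁻¹ * (24 * ((N-1:ℕ):ℝ≥0∞)) := by push_cast; ring
      _ = ((N-1:ℕ):ℝ≥0∞) := by
          rw [← mul_assoc, ENNReal.inv_mul_cancel (by norm_num) (by norm_num), one_mul]
  have hstep1 : (24:ℝ≥0∞)⁻¹ ≤ ((N-1:ℕ):ℝ≥0∞) * (12 * (N:ℝ≥0∞))⁻¹ := by
    calc (24:ℝ≥0∞)⁻¹ = 24⁻¹ * ((12 * (N:ℝ≥0∞)) * (12 * (N:ℝ≥0∞))⁻¹) := by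
          rw [ENNReal.mul_inv_cancel h12Nne h12Ntop, mul_one]
      _ = (24⁻¹ * (12 * (N:ℝ≥0∞))) * (12 * (N:ℝ≥0∞))⁻¹ := by ring
      _ ≤ ((N-1:ℕ):ℝ≥0∞) * (12 * (N:ℝ≥0∞))⁻¹ := mul_le_mul_left hkey _
  have hsplit : ((N-1:ℕ):ℝ≥0∞) * (12 * (N:ℝ≥0∞))⁻¹
      = (4⁻¹ * (((N-1:ℕ):ℝ≥0∞) * 3⁻¹)) * (N:ℝ≥0∞)⁻¹ := by
    rw [ENNReal.mul_inv (Or.inl (by norm_num)) (Or.inl (by norm_num))]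
    have h43 : ((12:ℝ≥0∞))⁻¹ = 4⁻¹ * 3⁻¹ := by
      rw [← ENNReal.mul_inv (Or.inl (by norm_num)) (Or.inl (by norm_num))]; norm_num
    rw [h43]; ring
  have hfinal : (24:ℝ≥0∞)⁻¹ ≤ (m.prod μ) E := by
    rw [hνE]
    calc (24:ℝ≥0∞)⁻¹ ≤ ((N-1:ℕ):ℝ≥0∞) * (12 * (N:ℝ≥0∞))⁻¹ := hstep1
      _ = (4⁻¹ * (((N-1:ℕ):ℝ≥0∞) * 3⁻¹)) * (N:ℝ≥0∞)⁻¹ := hsplit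
      _ ≤ (∫⁻ ω, F ω ∂μ) * (N:ℝ≥0∞)⁻¹ := mul_le_mul_left h4 _
  exact hfinal
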